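/- arXiv:1909.04732 — 5 statements merged into one kernel-verified Lean document; each statement's English description precedes it below -/
import Mathlib

section
/- Let G be a finite group, H a subgroup, and T a finite G-set of cardinality n determined by a homomorphism f : G → Σ_n (so the graph subgroup Γ_T = {(g, f(g)) : g ∈ G} ≤ G × Σ_n). Then the map φ sending a G-equivariant automorphism σ of T (viewed as an element of Σ_n commuting with the image of f) to the class of (e, σ) in the Weyl group W_{G×Σ_n}(Γ_T) = N_{G×Σ_n}(Γ_T)/Γ_T is a group isomorphism Aut_G(T) ≅ W_{G×Σ_n}(Γ_T). -/
def MonoidHom.graphSubgroup {G S : Type*} [Group G] [Group S] (f : G →* S) :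
    Subgroup (G × S) where
  carrier := {p | p.2 = f p.1}
  one_mem' := by simp
  mul_mem' := by
    rintro ⟨a, b⟩ ⟨c, d⟩ (hb : b = f a) (hd : d = f c)
    simp [hb, hd]
  inv_mem' := by
    rintro ⟨a, b⟩ (hb : b = f a)
    simp [hb]

section Aux
variable {G S : Type*} [Group G] [Group S] (f : G →* S)

lemma mem_graphSubgroup_iff (p : G × S) : p ∈ f.graphSubgroup ↔ p.2 = f p.1 := Iff.rfl

lemma one_mem_normalizer (σ : S) (hσ : σ ∈ Subgroup.centralizer (Set.range f)) :
    ((1 : G), σ) ∈ Subgroup.normalizer (f.graphSubgroup : Set (G × S)) := by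
  rw [Subgroup.mem_normalizer_iff]
  rintro ⟨a, b⟩
  simp only [mem_graphSubgroup_iff, Prod.mk_mul_mk, Prod.inv_mk, one_mul, mul_one, inv_one]
  constructor
  · rintro rfl
    have := hσ (f a) ⟨a, rfl⟩
    rw [← this]; group
  · intro h
    have hc := hσ (f a) ⟨a, rfl⟩
    have : σ * b * σ⁻¹ = σ * f a * σ⁻¹ := by rw [h, ← hc]; group
    have := mul_left_cancel (mul_right_cancel this)
    exact this

lemma graph_centralizer_of_mem_normalizer {g : G} {s : S}
    (h : (g, s) ∈ Subgroup.normalizer (f.graphSubgroup : Set (G × S))) :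
    (f g)⁻¹ * s ∈ Subgroup.centralizer (Set.range f) := by
  rw [Subgroup.mem_centralizer_iff]
  rintro _ ⟨a, rfl⟩
  rw [Subgroup.mem_normalizer_iff] at h
  have := (h (a, f a)).mp rfl
  simp only [mem_graphSubgroup_iff, Prod.mk_mul_mk, Prod.inv_mk, map_mul, map_inv] at this
  -- this : s * f a * s⁻¹ = f g * f a * (f g)⁻¹
  have key : s * f a = f g * f a * (f g)⁻¹ * s := by
    rw [← this]; group
  calc f a * ((f g)⁻¹ * s) = (f g)⁻¹ * (f g * f a * (f g)⁻¹ * s) := by group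
    _ = (f g)⁻¹ * (s * f a) := by rw [key]
    _ = (f g)⁻¹ * s * f a := by group

end Aux

/-- For a finite group `G` and a finite `G`-set `T` of cardinality `n` given by
`f : G → Σ_n`, the map `σ ↦ [(e,σ)]` is a group isomorphism from
`Aut_G(T)` (the centralizer of the image of `f` in `Σ_n`) to the Weyl group
`W_{G×Σ_n}(Γ_T) = N_{G×Σ_n}(Γ_T)/Γ_T` of the graph subgroup. -/
theorem autG_mulEquiv_weyl_of_graph {n : ℕ} {G : Type*} [Group G] [Fintype G]
    (f : G →* Equiv.Perm (Fin n)) :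
    ∃ e : Subgroup.centralizer (Set.range f) ≃*
        ((Subgroup.normalizer (f.graphSubgroup : Set (G × Equiv.Perm (Fin n)))) ⧸
          f.graphSubgroup.subgroupOf (Subgroup.normalizer (f.graphSubgroup : Set (G × Equiv.Perm (Fin n))))),
      ∀ (σ : Subgroup.centralizer (Set.range f))
        (hmem : ((1 : G), (σ : Equiv.Perm (Fin n))) ∈ (Subgroup.normalizer (f.graphSubgroup : Set (G × Equiv.Perm (Fin n))))),
        e σ = QuotientGroup.mk
          (⟨((1 : G), (σ : Equiv.Perm (Fin n))), hmem⟩ : (Subgroup.normalizer (f.graphSubgroup : Set (G × Equiv.Perm (Fin n))))) := by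
  set N := Subgroup.normalizer (f.graphSubgroup : Set (G × Equiv.Perm (Fin n)))
  set Γ' := f.graphSubgroup.subgroupOf N
  let φ : Subgroup.centralizer (Set.range f) →* N ⧸ Γ' :=
    { toFun := fun σ => QuotientGroup.mk
        (⟨((1 : G), (σ : Equiv.Perm (Fin n))), one_mem_normalizer f σ σ.2⟩ : N)
      map_one' := by
        rw [QuotientGroup.eq_one_iff]
        simp [Γ', Subgroup.mem_subgroupOf, mem_graphSubgroup_iff]
      map_mul' := by
        intro σ τ
        rw [← QuotientGroup.mk_mul]
        exact congrArg QuotientGroup.mk (Subtype.ext (by simp [Prod.ext_iff])) }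
  have hinj : Function.Injective φ := by
    rw [injective_iff_map_eq_one]
    intro σ hσ
    rw [show φ σ = QuotientGroup.mk _ from rfl, QuotientGroup.eq_one_iff] at hσ
    rw [Subgroup.mem_subgroupOf] at hσ
    have : (σ : Equiv.Perm (Fin n)) = f 1 := hσ
    ext1
    simpa using this
  have hsurj : Function.Surjective φ := by
    intro x
    obtain ⟨⟨⟨g, s⟩, hgs⟩, rfl⟩ := QuotientGroup.mk_surjective x
    refine ⟨⟨(f g)⁻¹ * s, graph_centralizer_of_mem_normalizer f hgs⟩, ?_⟩
    have hcomm : (f g) * s = s * (f g) := by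
      have hc := graph_centralizer_of_mem_normalizer f hgs (f g) ⟨g, rfl⟩
      rw [mul_inv_cancel_left] at hc
      conv_lhs => rw [hc]
      group
    rw [show φ _ = QuotientGroup.mk _ from rfl, QuotientGroup.eq]
    rw [Subgroup.mem_subgroupOf]
    show ((_ : G × _) ∈ f.graphSubgroup)
    rw [mem_graphSubgroup_iff]
    show ((f g)⁻¹ * s)⁻¹ * s = f ((1:G)⁻¹ * g)
    rw [mul_inv_rev, inv_inv, mul_assoc, hcomm]
    simp
  refine ⟨MulEquiv.ofBijective φ ⟨hinj, hsurj⟩, fun σ hmem => rfl⟩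
end

section
/- Let G be a finite group, K, H ≤ G, and g ∈ G with g⁻¹Kg ⊆ H. Then the stabilizer in W_G(K) = N_G(K)/K of the double coset KgH (under the action n·KgH = KngH) equals the image of N_{gHg⁻¹}(K), i.e., it is isomorphic to W_{gHg⁻¹}(K) = N_{gHg⁻¹}(K)/K. Explicitly, [n] stabilizes KgH iff n = kgh g⁻¹ for some k ∈ K, h ∈ H, equivalently [n] = [ghg⁻¹] for some h ∈ H with ghg⁻¹ ∈ N_G(K). -/
/-- Let `g ∈ G` with `g⁻¹Kg ⊆ H`.  An element `[n]` of the Weyl group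
`W_G(K) = N_G(K)/K` stabilizes the double coset `KgH` (for the action `n·KgH = K(ng)H`)
iff `n = k·(ghg⁻¹)` for some `k ∈ K`, `h ∈ H`; equivalently, iff `n` agrees modulo `K`
with an element of `N_{gHg⁻¹}(K) = gHg⁻¹ ∩ N_G(K)`, so the stabilizer is the image of
`N_{gHg⁻¹}(K)`, i.e. isomorphic to `W_{gHg⁻¹}(K)`. -/
theorem stabilizer_of_double_coset {G : Type*} [Group G] [Fintype G]
    (K H : Subgroup G) (g : G) (hg : ∀ k ∈ K, g⁻¹ * k * g ∈ H) :
    ∀ n ∈ Subgroup.normalizer (K : Set G),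
      (DoubleCoset.mk K H (n * g) = DoubleCoset.mk K H g ↔
        ∃ k ∈ K, ∃ h ∈ H, n = k * (g * h * g⁻¹)) ∧
      (DoubleCoset.mk K H (n * g) = DoubleCoset.mk K H g ↔
        ∃ b ∈ Subgroup.map (MulAut.conj g).toMonoidHom H ⊓ Subgroup.normalizer (K : Set G),
          n * b⁻¹ ∈ K) := by
  intro n hn
  have hfirst : DoubleCoset.mk K H (n * g) = DoubleCoset.mk K H g ↔
      ∃ k ∈ K, ∃ h ∈ H, n = k * (g * h * g⁻¹) := by
    rw [DoubleCoset.eq]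
    constructor
    · rintro ⟨k, hk, h, hh, heq⟩
      refine ⟨k⁻¹, K.inv_mem hk, h⁻¹, H.inv_mem hh, ?_⟩
      calc n = k⁻¹ * (k * (n * g) * h) * h⁻¹ * g⁻¹ := by group
        _ = k⁻¹ * g * h⁻¹ * g⁻¹ := by rw [← heq]
        _ = k⁻¹ * (g * h⁻¹ * g⁻¹) := by group
    · rintro ⟨k, hk, h, hh, heq⟩
      refine ⟨k⁻¹, K.inv_mem hk, h⁻¹, H.inv_mem hh, ?_⟩
      rw [heq]; group
  refine ⟨hfirst, hfirst.trans ?_⟩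
  constructor
  · rintro ⟨k, hk, h, hh, heq⟩
    refine ⟨g * h * g⁻¹, ⟨⟨h, hh, by simp [MulAut.conj_apply, mul_assoc]⟩, ?_⟩, ?_⟩
    · have : g * h * g⁻¹ = k⁻¹ * n := by rw [heq]; group
      rw [this]
      exact Subgroup.mul_mem _ ((Subgroup.normalizer (K : Set G)).inv_mem (Subgroup.le_normalizer hk)) hn
    · have : n * (g * h * g⁻¹)⁻¹ = k := by rw [heq]; group
      rw [this]; exact hk
  · rintro ⟨b, ⟨⟨h, hh, hb⟩, _⟩, hnb⟩
    refine ⟨n * b⁻¹, hnb, h, hh, ?_⟩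
    simp only [MulEquiv.coe_toMonoidHom, MulAut.conj_apply] at hb
    rw [show g * h * g⁻¹ = b by rw [← hb]]
    group
end

section
/- Let G be a finite group and K, H ≤ G. Define (K)_{G;H} to be the set of H-conjugacy classes of subgroups of the form g⁻¹Kg (g ∈ G) that are contained in H. The map θ : (K:G:H) → (K)_{G;H} sending the double coset KgH to the H-conjugacy class of g⁻¹Kg is well-defined, surjective, invariant under the W_G(K)-action on (K:G:H), and induces a bijection (K:G:H)/W_G(K) ≅ (K)_{G;H}. -/
variable {G : Type*} [Group G]

/-- `θ' g = g⁻¹ K g`, the conjugate subgroup attached to a double-coset representative. -/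
def conjSub (K : Subgroup G) (g : G) : Subgroup G :=
  Subgroup.map (MulAut.conj g⁻¹).toMonoidHom K

lemma mem_conjSub {K : Subgroup G} {g x : G} : x ∈ conjSub K g ↔ g * x * g⁻¹ ∈ K := by
  constructor
  · rintro ⟨k, hk, rfl⟩
    simp only [SetLike.mem_coe] at hk
    simp only [MulAut.conj_apply, MulEquiv.coe_toMonoidHom]
    convert hk using 1
    group
  · intro hx
    exact ⟨g * x * g⁻¹, hx, by simp only [MulAut.conj_apply, MulEquiv.coe_toMonoidHom]; group⟩

lemma mem_map_conj {L : Subgroup G} {h x : G} :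
    x ∈ Subgroup.map (MulAut.conj h⁻¹).toMonoidHom L ↔ h * x * h⁻¹ ∈ L := by
  constructor
  · rintro ⟨l, hl, rfl⟩
    simp only [SetLike.mem_coe] at hl
    simp only [MulAut.conj_apply, MulEquiv.coe_toMonoidHom]
    convert hl using 1
    group
  · intro hx
    exact ⟨h * x * h⁻¹, hx, by simp only [MulAut.conj_apply, MulEquiv.coe_toMonoidHom]; group⟩

/-- The map `θ : (K:G:H) → (K)_{G;H}`, `KgH ↦ [g⁻¹Kg]_H`, is well defined
(representatives of the same double coset give `H`-conjugate subgroups), invariant under the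
`W_G(K)`-action `n·KgH = KngH` (indeed `(ng)⁻¹K(ng) = g⁻¹Kg`), surjective onto the set of
`H`-conjugacy classes of `G`-conjugates of `K` lying in `H`, and injective on `W_G(K)`-orbits;
hence it induces a bijection `(K:G:H)/W_G(K) ≅ (K)_{G;H}`. -/
theorem theta_induces_bijection {G : Type*} [Group G] [Fintype G] (K H : Subgroup G) :
    -- well defined up to H-conjugacy
    (∀ g g' : G, DoubleCoset.mk K H g = DoubleCoset.mk K H g' →
      ∃ h ∈ H, conjSub K g' = Subgroup.map (MulAut.conj h⁻¹).toMonoidHom (conjSub K g)) ∧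
    -- invariance under the Weyl action
    (∀ n ∈ Subgroup.normalizer (K : Set G), ∀ g : G, conjSub K (n * g) = conjSub K g) ∧
    -- surjectivity onto G-conjugates of K contained in H
    (∀ L : Subgroup G, (∃ g : G, L = conjSub K g) → L ≤ H →
      ∃ g : G, (∀ k ∈ K, g⁻¹ * k * g ∈ H) ∧ conjSub K g = L) ∧
    -- injectivity on Weyl orbits
    (∀ g g' : G, (∀ k ∈ K, g⁻¹ * k * g ∈ H) → (∀ k ∈ K, g'⁻¹ * k * g' ∈ H) →
      (∃ h ∈ H, conjSub K g' = Subgroup.map (MulAut.conj h⁻¹).toMonoidHom (conjSub K g)) →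
      ∃ n ∈ Subgroup.normalizer (K : Set G), DoubleCoset.mk K H (n * g) = DoubleCoset.mk K H g') := by
  refine ⟨?_, ?_, ?_, ?_⟩
  · intro g g' hgg'
    obtain ⟨k, hk, h, hh, rfl⟩ := (DoubleCoset.eq K H g g').1 hgg'
    refine ⟨h, hh, ?_⟩
    ext x
    rw [mem_conjSub, mem_map_conj, mem_conjSub]
    constructor
    · intro hx
      have h2 : k⁻¹ * (k * g * h * x * (k * g * h)⁻¹) * k ∈ K :=
        K.mul_mem (K.mul_mem (K.inv_mem hk) hx) hk
      convert h2 using 1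
      group
    · intro hx
      have h2 : k * (g * (h * x * h⁻¹) * g⁻¹) * k⁻¹ ∈ K :=
        K.mul_mem (K.mul_mem hk hx) (K.inv_mem hk)
      convert h2 using 1
      group
  · intro n hn g
    ext x
    rw [mem_conjSub, mem_conjSub]
    have hn' := Subgroup.mem_normalizer_iff.1 hn (g * x * g⁻¹)
    constructor
    · intro hx
      apply hn'.2
      convert hx using 1
      group
    · intro hx
      have := hn'.1 hx
      convert this using 1
      group
  · rintro L ⟨g, rfl⟩ hL
    refine ⟨g, fun k hk => ?_, rfl⟩
    refine hL (mem_conjSub.2 ?_)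
    convert hk using 1
    group
  · rintro g g' _ _ ⟨h, hh, hconj⟩
    refine ⟨g' * h⁻¹ * g⁻¹, ?_, ?_⟩
    · rw [Subgroup.mem_normalizer_iff]
      intro x
      set n := g' * h⁻¹ * g⁻¹ with hn
      constructor
      · intro hx
        have h1 : g⁻¹ * x * g ∈ conjSub K g := mem_conjSub.2 (by
          convert hx using 1; group)
        have h2 : h⁻¹ * (g⁻¹ * x * g) * h ∈ conjSub K g' := by
          rw [hconj, mem_map_conj]
          convert h1 using 1
          group
        have h3 := mem_conjSub.1 h2
        convert h3 using 1
        simp only [hn]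
        group
      · intro hx
        have h1 : g'⁻¹ * (n * x * n⁻¹) * g' ∈ conjSub K g' :=
          mem_conjSub.2 (by convert hx using 1; group)
        rw [hconj, mem_map_conj, mem_conjSub] at h1
        convert h1 using 1
        simp only [hn]
        group
    · rw [DoubleCoset.eq]
      exact ⟨1, K.one_mem, h, hh, by group⟩
end

section
/- Let G be a finite group and H, K ≤ G with K ≤ H. Suppose a collection C of finite G-sets and H-sets (an indexing system) is closed under: restriction, self-induction (if H/L ∈ C(H) and T ∈ C(L) then H ×_L T ∈ C(H)), isomorphism, finite limits (in particular passage to summands/orbits), and contains G/H ∈ C(G). Then G/K ∈ C(G) if and only if H/(g⁻¹Kg) ∈ C(H) for every g ∈ G with g⁻¹Kg ⊆ H. -/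
/-- Model an indexing system by its admissible orbits: `adm A B` means that
`A ≤ B` and the orbit `B/A` is admissible (i.e. `B/A ∈ C(B)`).  The closure properties of an
indexing system (trivial orbits, conjugation/isomorphism, restriction to subgroups with
passage to summands, and self-induction/composition) are taken as hypotheses.  Then, for
`K ≤ H` with `G/H` admissible (`adm H ⊤`): `G/K` is admissible iff `H/(g⁻¹Kg)` is admissible
for every `g ∈ G` with `g⁻¹Kg ⊆ H`. -/
theorem admissible_orbit_iff {G : Type*} [Group G] [Fintype G]
    (adm : Subgroup G → Subgroup G → Prop)
    (h_le : ∀ A B, adm A B → A ≤ B)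
    (h_refl : ∀ A, adm A A)
    (h_conj : ∀ (A B : Subgroup G) (g : G), adm A B →
      adm (Subgroup.map (MulAut.conj g⁻¹).toMonoidHom A)
        (Subgroup.map (MulAut.conj g⁻¹).toMonoidHom B))
    (h_res : ∀ A B M, adm A B → M ≤ B → adm (A ⊓ M) M)
    (h_selfind : ∀ A B C, adm A B → adm B C → adm A C)
    (K H : Subgroup G) (hKH : K ≤ H) (hH : adm H ⊤) :
    adm K ⊤ ↔
      ∀ g : G, Subgroup.map (MulAut.conj g⁻¹).toMonoidHom K ≤ H →
        adm (Subgroup.map (MulAut.conj g⁻¹).toMonoidHom K) H := by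
  constructor
  · intro hK g hg
    have h1 := h_conj K ⊤ g hK
    rw [Subgroup.map_top_of_surjective _ (MulEquiv.surjective _)] at h1
    have h2 := h_res _ ⊤ H h1 le_top
    rwa [inf_eq_left.mpr hg] at h2
  · intro h
    have hmap : Subgroup.map (MulAut.conj (1:G)⁻¹).toMonoidHom K = K := by
      ext x; simp
    have h1 := h 1 (by rw [hmap]; exact hKH)
    rw [hmap] at h1
    exact h_selfind K H ⊤ h1 hH
end

section
/- Let G be a finite group, H ≤ G a proper subgroup, T a finite H-set of cardinality n with graph subgroup Γ_T ≤ H × Σ_n ≤ G × Σ_n. Then for any (G × Σ_n)-set Y, the G-set ((G×Σ_n)/Γ_T) ×_{Σ_n} Y is isomorphic to G ×_H (((H×Σ_n)/Γ_T) ×_{Σ_n} Y), and in particular it has no G-fixed points when H is a proper subgroup. -/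
section

variable {G : Type*} [Group G] (H : Subgroup G) {n : ℕ}
  (f : H →* Equiv.Perm (Fin n))

/-- The graph `Γ_T` of `f : H → Σ_n`, viewed as a subgroup of `G × Σ_n`
(via `Γ_T ≤ H × Σ_n ≤ G × Σ_n`). -/
def graphInAmbient : Subgroup (G × Equiv.Perm (Fin n)) where
  carrier := {p | ∃ hh : p.1 ∈ H, p.2 = f ⟨p.1, hh⟩}
  one_mem' := ⟨H.one_mem, (map_one f).symm⟩
  mul_mem' := by
    intro p q hp hq
    obtain ⟨ha, hb⟩ := hp
    obtain ⟨hc, hd⟩ := hq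
    exact ⟨H.mul_mem ha hc, by show p.2 * q.2 = _; rw [hb, hd, ← map_mul]; rfl⟩
  inv_mem' := by
    intro p hp
    obtain ⟨ha, hb⟩ := hp
    exact ⟨H.inv_mem ha, by show p.2⁻¹ = _; rw [hb, ← map_inv]; rfl⟩

/-- The graph `Γ_T` of `f : H → Σ_n` as a subgroup of `H × Σ_n`. -/
def graphInH : Subgroup (H × Equiv.Perm (Fin n)) where
  carrier := {p | p.2 = f p.1}
  one_mem' := by simp
  mul_mem' := by
    rintro ⟨a, b⟩ ⟨c, d⟩ (hb : b = f a) (hd : d = f c)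
    simp [hb, hd]
  inv_mem' := by
    rintro ⟨a, b⟩ (hb : b = f a)
    simp [hb]

lemma smul_one_aux {α : Type*} [MulAction (G × Equiv.Perm (Fin n)) α]
    (a b : Equiv.Perm (Fin n)) (y : α) :
    ((1, a) : G × Equiv.Perm (Fin n)) • ((1, b) : G × Equiv.Perm (Fin n)) • y =
      ((1, a * b) : G × Equiv.Perm (Fin n)) • y := by
  rw [smul_smul, Prod.mk_mul_mk, one_mul]

variable (Y : Type*) [MulAction (G × Equiv.Perm (Fin n)) Y]

/-- The antidiagonal `Σ_n`-relation defining `((G×Σ_n)/Γ_T) ×_{Σ_n} Y`. -/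
def balSetoidG : Setoid (((G × Equiv.Perm (Fin n)) ⧸ graphInAmbient H f) × Y) where
  r z z' := ∃ σ : Equiv.Perm (Fin n),
    z'.1 = ((1, σ) : G × Equiv.Perm (Fin n)) • z.1 ∧
    z'.2 = ((1, σ) : G × Equiv.Perm (Fin n)) • z.2
  iseqv := by
    constructor
    · exact fun z => ⟨1, by simp [Prod.mk_one_one], by simp [Prod.mk_one_one]⟩
    · rintro z z' ⟨σ, h1, h2⟩
      exact ⟨σ⁻¹, by rw [h1, smul_one_aux]; simp [Prod.mk_one_one], by rw [h2, smul_one_aux]; simp [Prod.mk_one_one]⟩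
    · rintro z z' z'' ⟨σ, h1, h2⟩ ⟨τ, h1', h2'⟩
      exact ⟨τ * σ, by rw [h1', h1, smul_one_aux], by rw [h2', h2, smul_one_aux]⟩

/-- The balanced product `((G×Σ_n)/Γ_T) ×_{Σ_n} Y`, a `G`-set. -/
def BalG : Type _ := Quotient (balSetoidG H f Y)

lemma smul_comm_aux {α : Type*} [MulAction (G × Equiv.Perm (Fin n)) α]
    (g : G) (σ : Equiv.Perm (Fin n)) (y : α) :
    ((1, σ) : G × Equiv.Perm (Fin n)) • ((g, 1) : G × Equiv.Perm (Fin n)) • y =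
      ((g, 1) : G × Equiv.Perm (Fin n)) • ((1, σ) : G × Equiv.Perm (Fin n)) • y := by
  rw [smul_smul, smul_smul, Prod.mk_mul_mk, Prod.mk_mul_mk]
  rw [one_mul, mul_one, one_mul, mul_one]

/-- The `G`-action on `BalG`. -/
def BalG.act (g : G) : BalG H f Y → BalG H f Y :=
  Quotient.map
    (fun z => (((g, 1) : G × Equiv.Perm (Fin n)) • z.1,
               ((g, 1) : G × Equiv.Perm (Fin n)) • z.2))
    (by
      rintro z z' ⟨σ, h1, h2⟩
      exact ⟨σ, by dsimp only; rw [h1, smul_comm_aux],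
        by dsimp only; rw [h2, smul_comm_aux]⟩)

/-- The analogous balanced product relation for `((H×Σ_n)/Γ_T) ×_{Σ_n} Y`. -/
def balSetoidH : Setoid (((H × Equiv.Perm (Fin n)) ⧸ graphInH H f) × Y) where
  r z z' := ∃ σ : Equiv.Perm (Fin n),
    z'.1 = ((1, σ) : H × Equiv.Perm (Fin n)) • z.1 ∧
    z'.2 = ((1, σ) : G × Equiv.Perm (Fin n)) • z.2
  iseqv := by
    constructor
    · exact fun z => ⟨1, by simp [Prod.mk_one_one], by simp [Prod.mk_one_one]⟩
    · rintro z z' ⟨σ, h1, h2⟩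
      refine ⟨σ⁻¹, ?_, by rw [h2, smul_one_aux]; simp [Prod.mk_one_one]⟩
      rw [h1, smul_smul, Prod.mk_mul_mk, one_mul]
      simp [Prod.mk_one_one]
    · rintro z z' z'' ⟨σ, h1, h2⟩ ⟨τ, h1', h2'⟩
      refine ⟨τ * σ, ?_, by rw [h2', h2, smul_one_aux]⟩
      rw [h1', h1, smul_smul, Prod.mk_mul_mk, one_mul]

/-- The balanced product `((H×Σ_n)/Γ_T) ×_{Σ_n} Y`, an `H`-set. -/
def BalH : Type _ := Quotient (balSetoidH H f Y)

/-- The `H`-action on `BalH`. -/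
def BalH.act (h : H) : BalH H f Y → BalH H f Y :=
  Quotient.map
    (fun z => (((h, 1) : H × Equiv.Perm (Fin n)) • z.1,
               (((h : G), 1) : G × Equiv.Perm (Fin n)) • z.2))
    (by
      rintro z z' ⟨σ, h1, h2⟩
      refine ⟨σ, ?_, by dsimp only; rw [h2, smul_comm_aux]⟩
      dsimp only
      rw [h1, smul_smul, smul_smul, Prod.mk_mul_mk, Prod.mk_mul_mk]
      rw [one_mul, mul_one, one_mul, mul_one])

lemma BalH.act_one (z : BalH H f Y) : BalH.act H f Y 1 z = z := by
  refine Quotient.inductionOn z fun p => ?_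
  show Quotient.mk _ _ = Quotient.mk _ _
  simp [BalH.act, Prod.mk_one_one]

lemma BalH.act_mul (a b : H) (z : BalH H f Y) :
    BalH.act H f Y (a * b) z = BalH.act H f Y a (BalH.act H f Y b z) := by
  refine Quotient.inductionOn z fun p => ?_
  simp only [BalH.act, Quotient.map_mk]
  congr 1
  refine Prod.ext ?_ ?_
  · show ((a * b, 1) : H × Equiv.Perm (Fin n)) • p.1 = _
    rw [smul_smul, Prod.mk_mul_mk, mul_one]
  · show (((↑(a * b) : G), 1) : G × Equiv.Perm (Fin n)) • p.2 =
      (((↑a : G), 1) : G × Equiv.Perm (Fin n)) • (((↑b : G), 1) : G × Equiv.Perm (Fin n)) • p.2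
    rw [smul_smul, Prod.mk_mul_mk, mul_one, Subgroup.coe_mul]

/-- The induction relation defining `G ×_H (BalH)`. -/
def indSetoidBal : Setoid (G × BalH H f Y) where
  r p q := ∃ h : H, q.1 = p.1 * h ∧ q.2 = BalH.act H f Y h⁻¹ p.2
  iseqv := by
    constructor
    · exact fun p => ⟨1, by simp, by rw [inv_one, BalH.act_one]⟩
    · rintro p q ⟨h, h1, h2⟩
      refine ⟨h⁻¹, by simp [h1, mul_assoc], ?_⟩
      rw [inv_inv, h2, ← BalH.act_mul, mul_inv_cancel, BalH.act_one]
    · rintro p q r ⟨h, h1, h2⟩ ⟨h', h1', h2'⟩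
      refine ⟨h * h', by simp [h1', h1, mul_assoc], ?_⟩
      rw [h2', h2, ← BalH.act_mul, mul_inv_rev]

/-- The induced `G`-set `G ×_H (((H×Σ_n)/Γ_T) ×_{Σ_n} Y)`. -/
def IndBalH : Type _ := Quotient (indSetoidBal H f Y)

/-- The `G`-action on `G ×_H (BalH)`. -/
def IndBalH.act (g : G) : IndBalH H f Y → IndBalH H f Y :=
  Quotient.map (fun p => (g * p.1, p.2))
    (by rintro p q ⟨h, h1, h2⟩; exact ⟨h, by simp [h1, mul_assoc], h2⟩)

end


section Aux

variable {G : Type*} [Group G] (H : Subgroup G) {n : ℕ}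
  (f : H →* Equiv.Perm (Fin n))
  (Y : Type*) [MulAction (G × Equiv.Perm (Fin n)) Y]

lemma mem_graphInH {p : H × Equiv.Perm (Fin n)} :
    p ∈ graphInH H f ↔ p.2 = f p.1 := Iff.rfl

lemma mem_graphInAmbient {p : G × Equiv.Perm (Fin n)} :
    p ∈ graphInAmbient H f ↔ ∃ hh : p.1 ∈ H, p.2 = f ⟨p.1, hh⟩ := Iff.rfl

/-- Raw forward map `(G×Σn) × Y → G ×_H BalH`. -/
def rawTo (p : G × Equiv.Perm (Fin n)) (y : Y) : IndBalH H f Y :=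
  Quotient.mk (indSetoidBal H f Y)
    (p.1, Quotient.mk (balSetoidH H f Y)
      ((QuotientGroup.mk ((1 : H), p.2) : _ ⧸ graphInH H f),
        ((p.1⁻¹, 1) : G × Equiv.Perm (Fin n)) • y))

lemma rawTo_coset (p : G × Equiv.Perm (Fin n)) {γ : G × Equiv.Perm (Fin n)}
    (hγ : γ ∈ graphInAmbient H f) (y : Y) :
    rawTo H f Y (p * γ) y = rawTo H f Y p y := by
  obtain ⟨hh, h2⟩ := hγ
  symm
  refine Quotient.sound ⟨⟨γ.1, hh⟩, rfl, ?_⟩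
  show Quotient.mk _ _ = BalH.act H f Y _ (Quotient.mk _ _)
  unfold BalH.act
  rw [Quotient.map_mk]
  refine congrArg _ (Prod.ext ?_ ?_)
  · show (QuotientGroup.mk ((1:H), (p * γ).2) : _ ⧸ graphInH H f) =
      ((⟨γ.1, hh⟩ : H)⁻¹, (1 : Equiv.Perm (Fin n))) • QuotientGroup.mk ((1:H), p.2)
    rw [MulAction.Quotient.smul_mk]
    refine (QuotientGroup.eq).mpr ?_
    rw [mem_graphInH]
    simp [Prod.mul_def, h2]
  · show ((p * γ).1⁻¹, (1 : Equiv.Perm (Fin n))) • y =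
      ((((⟨γ.1, hh⟩ : H)⁻¹ : H) : G), (1 : Equiv.Perm (Fin n))) •
        (((p.1⁻¹ : G), (1 : Equiv.Perm (Fin n))) : G × Equiv.Perm (Fin n)) • y
    rw [smul_smul]
    congr 1
    simp [Prod.mul_def, mul_inv_rev]

lemma rawTo_sigma (σ : Equiv.Perm (Fin n)) (p : G × Equiv.Perm (Fin n)) (y : Y) :
    rawTo H f Y (((1, σ) : G × Equiv.Perm (Fin n)) * p)
      (((1, σ) : G × Equiv.Perm (Fin n)) • y) = rawTo H f Y p y := by
  symm
  refine Quotient.sound ⟨1, by simp [Prod.mul_def], ?_⟩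
  rw [inv_one, BalH.act_one]
  symm
  refine Quotient.sound ⟨σ, ?_, ?_⟩
  · show (QuotientGroup.mk ((1 : H), (((1, σ) : G × Equiv.Perm (Fin n)) * p).2) :
        _ ⧸ graphInH H f) =
      (((1 : H), σ) : H × Equiv.Perm (Fin n)) • QuotientGroup.mk ((1 : H), p.2)
    rw [MulAction.Quotient.smul_mk]
    congr 1
    simp [Prod.mul_def]
  · show (((((1, σ) : G × Equiv.Perm (Fin n)) * p).1⁻¹, (1 : Equiv.Perm (Fin n))) :
        G × Equiv.Perm (Fin n)) • (((1, σ) : G × Equiv.Perm (Fin n)) • y) =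
      ((1, σ) : G × Equiv.Perm (Fin n)) • (((p.1⁻¹, 1) : G × Equiv.Perm (Fin n)) • y)
    rw [smul_smul, smul_smul]
    congr 1
    simp [Prod.mul_def]

/-- The forward map `BalG → IndBalH`. -/
def toInd : BalG H f Y → IndBalH H f Y :=
  Quotient.lift
    (fun z => Quotient.liftOn z.1 (fun p => rawTo H f Y p z.2)
      (by
        intro p q hpq
        have hm : p⁻¹ * q ∈ graphInAmbient H f := QuotientGroup.leftRel_apply.mp hpq
        have hq : q = p * (p⁻¹ * q) := by group
        show rawTo H f Y p z.2 = rawTo H f Y q z.2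
        rw [hq, rawTo_coset H f Y p hm]))
    (by
      rintro ⟨x, y⟩ ⟨x', y'⟩ ⟨σ, h1, h2⟩
      dsimp only at h1 h2 ⊢
      subst h1 h2
      induction x using Quotient.inductionOn with
      | h p =>
        exact (rawTo_sigma H f Y σ p y).symm)

lemma toInd_mk (p : G × Equiv.Perm (Fin n)) (y : Y) :
    toInd H f Y (Quotient.mk _ ((QuotientGroup.mk p : _ ⧸ graphInAmbient H f), y)) =
      rawTo H f Y p y := rfl

lemma toInd_act (g : G) (z : BalG H f Y) :
    toInd H f Y (BalG.act H f Y g z) = IndBalH.act H f Y g (toInd H f Y z) := by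
  refine Quotient.inductionOn z fun w => ?_
  obtain ⟨x, y⟩ := w
  induction x using Quotient.inductionOn with
  | h p =>
    show rawTo H f Y (((g, 1) : G × Equiv.Perm (Fin n)) * p)
        (((g, 1) : G × Equiv.Perm (Fin n)) • y) =
      IndBalH.act H f Y g (rawTo H f Y p y)
    unfold IndBalH.act rawTo
    rw [Quotient.map_mk]
    refine congrArg _ (Prod.ext ?_ ?_)
    · rfl
    have h1 : (QuotientGroup.mk ((1 : H), (((g, 1) : G × Equiv.Perm (Fin n)) * p).2) :
        _ ⧸ graphInH H f) = QuotientGroup.mk ((1 : H), p.2) := by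
      congr 1
    have h2 : ((((g, 1) : G × Equiv.Perm (Fin n)) * p).1⁻¹, (1 : Equiv.Perm (Fin n))) •
        (((g, 1) : G × Equiv.Perm (Fin n)) • y) =
        ((p.1⁻¹, 1) : G × Equiv.Perm (Fin n)) • y := by
      rw [smul_smul]
      congr 1
      simp [Prod.mul_def, mul_inv_rev, mul_assoc]
    exact congrArg (Quotient.mk (balSetoidH H f Y)) (Prod.ext h1 h2)

lemma graphInH_le {δ : H × Equiv.Perm (Fin n)} (hδ : δ ∈ graphInH H f) :
    (((δ.1 : G), δ.2) : G × Equiv.Perm (Fin n)) ∈ graphInAmbient H f :=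
  ⟨δ.1.2, by rw [mem_graphInH] at hδ; rw [hδ]⟩

/-- Raw backward map. -/
def rawBack (g' : G) (q : H × Equiv.Perm (Fin n)) (y' : Y) : BalG H f Y :=
  Quotient.mk (balSetoidG H f Y)
    ((QuotientGroup.mk ((g' * (q.1 : G), q.2)) : _ ⧸ graphInAmbient H f),
      ((g', 1) : G × Equiv.Perm (Fin n)) • y')

lemma rawBack_coset (g' : G) (q : H × Equiv.Perm (Fin n))
    {γ : H × Equiv.Perm (Fin n)} (hγ : γ ∈ graphInH H f) (y' : Y) :
    rawBack H f Y g' (q * γ) y' = rawBack H f Y g' q y' := by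
  unfold rawBack
  refine congrArg _ (Prod.ext ?_ rfl)
  refine (QuotientGroup.eq).mpr ?_
  have key : (g' * ((q * γ).1 : G), (q * γ).2)⁻¹ * (g' * (q.1 : G), q.2) =
      (((γ⁻¹.1 : H) : G), γ⁻¹.2) := by
    refine Prod.ext ?_ ?_
    · push_cast
      simp [mul_inv_rev, mul_assoc]
    · simp [mul_inv_rev]
  rw [key]
  exact graphInH_le H f (inv_mem hγ)

lemma rawBack_sigma (g' : G) (σ : Equiv.Perm (Fin n)) (q : H × Equiv.Perm (Fin n)) (y' : Y) :
    rawBack H f Y g' ((((1 : H), σ) : H × Equiv.Perm (Fin n)) * q)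
      (((1, σ) : G × Equiv.Perm (Fin n)) • y') = rawBack H f Y g' q y' := by
  symm
  refine Quotient.sound ⟨σ, ?_, ?_⟩
  · show (QuotientGroup.mk ((g' * (((((1 : H), σ) : H × Equiv.Perm (Fin n)) * q).1 : G),
        ((((1 : H), σ) : H × Equiv.Perm (Fin n)) * q).2)) : _ ⧸ graphInAmbient H f) =
      ((1, σ) : G × Equiv.Perm (Fin n)) • QuotientGroup.mk ((g' * (q.1 : G), q.2))
    rw [MulAction.Quotient.smul_mk]
    congr 1
    refine Prod.ext ?_ ?_
    · push_cast
      simp [Prod.mul_def]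
    · simp [Prod.mul_def]
  · show ((g', 1) : G × Equiv.Perm (Fin n)) • (((1, σ) : G × Equiv.Perm (Fin n)) • y') =
      ((1, σ) : G × Equiv.Perm (Fin n)) • (((g', 1) : G × Equiv.Perm (Fin n)) • y')
    rw [smul_smul, smul_smul]
    congr 1
    simp [Prod.mul_def]

lemma rawBack_ind (g' : G) (h : H) (q : H × Equiv.Perm (Fin n)) (y' : Y) :
    rawBack H f Y (g' * h) (((h⁻¹, (1 : Equiv.Perm (Fin n))) : H × Equiv.Perm (Fin n)) * q)
      ((((h⁻¹ : H) : G), (1 : Equiv.Perm (Fin n))) • y') = rawBack H f Y g' q y' := by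
  unfold rawBack
  have h1 : g' * (h : G) *
      ((((h⁻¹, (1 : Equiv.Perm (Fin n))) : H × Equiv.Perm (Fin n)) * q).1 : G) =
      g' * (q.1 : G) := by
    simp [Prod.mul_def, mul_assoc]
  have h2 : (((h⁻¹, (1 : Equiv.Perm (Fin n))) : H × Equiv.Perm (Fin n)) * q).2 = q.2 := by
    simp [Prod.mul_def]
  have h3 : ((g' * (h : G), (1 : Equiv.Perm (Fin n))) : G × Equiv.Perm (Fin n)) •
      (((((h⁻¹ : H) : G), (1 : Equiv.Perm (Fin n))) : G × Equiv.Perm (Fin n)) • y') =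
      ((g', 1) : G × Equiv.Perm (Fin n)) • y' := by
    rw [smul_smul]
    congr 1
    refine Prod.ext ?_ ?_ <;> simp [Prod.mul_def, mul_assoc]
  exact congrArg (Quotient.mk (balSetoidG H f Y))
    (Prod.ext (congrArg (fun t => (QuotientGroup.mk t : _ ⧸ graphInAmbient H f))
      (Prod.ext h1 h2)) h3)

/-- The backward map `IndBalH → BalG`. -/
def toBal : IndBalH H f Y → BalG H f Y :=
  Quotient.lift
    (fun p : G × BalH H f Y =>
      Quotient.lift
        (fun w : ((H × Equiv.Perm (Fin n)) ⧸ graphInH H f) × Y =>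
          Quotient.liftOn w.1 (fun q => rawBack H f Y p.1 q w.2)
            (by
              intro q q' hqq
              have hm : q⁻¹ * q' ∈ graphInH H f := QuotientGroup.leftRel_apply.mp hqq
              have hq : q' = q * (q⁻¹ * q') := by group
              show rawBack H f Y p.1 q w.2 = rawBack H f Y p.1 q' w.2
              rw [hq, rawBack_coset H f Y p.1 q hm]))
        (by
          rintro ⟨x, y'⟩ ⟨x', y''⟩ ⟨σ, h1, h2⟩
          dsimp only at h1 h2 ⊢
          subst h1 h2
          induction x using Quotient.inductionOn with
          | h q =>
            exact (rawBack_sigma H f Y p.1 σ q y').symm)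
        p.2)
    (by
      rintro ⟨g', b⟩ ⟨g'', b'⟩ ⟨h, h1, h2⟩
      dsimp only at h1 h2 ⊢
      subst h1 h2
      induction b using Quotient.inductionOn with
      | h w =>
        obtain ⟨x, y'⟩ := w
        induction x using Quotient.inductionOn with
        | h q =>
          exact (rawBack_ind H f Y g' h q y').symm)

lemma toBal_toInd (z : BalG H f Y) : toBal H f Y (toInd H f Y z) = z := by
  refine Quotient.inductionOn z fun w => ?_
  obtain ⟨x, y⟩ := w
  induction x using Quotient.inductionOn with
  | h p =>
    show rawBack H f Y p.1 ((1 : H), p.2) (((p.1⁻¹, 1) : G × Equiv.Perm (Fin n)) • y) =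
      Quotient.mk _ (Quotient.mk _ p, y)
    unfold rawBack
    refine congrArg _ (Prod.ext ?_ ?_)
    · show (QuotientGroup.mk ((p.1 * ((((1 : H), p.2) : H × Equiv.Perm (Fin n)).1 : G),
          (((1 : H), p.2) : H × Equiv.Perm (Fin n)).2)) : _ ⧸ graphInAmbient H f) =
        Quotient.mk _ p
      have h1 : ((p.1 * ((((1 : H), p.2) : H × Equiv.Perm (Fin n)).1 : G),
          (((1 : H), p.2) : H × Equiv.Perm (Fin n)).2) : G × Equiv.Perm (Fin n)) = p := by
        refine Prod.ext ?_ rfl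
        simp
      rw [h1]
    · show ((p.1, (1 : Equiv.Perm (Fin n))) : G × Equiv.Perm (Fin n)) •
          (((p.1⁻¹, 1) : G × Equiv.Perm (Fin n)) • y) = y
      rw [smul_smul]
      have h2 : ((p.1, (1 : Equiv.Perm (Fin n))) : G × Equiv.Perm (Fin n)) * (p.1⁻¹, 1) = 1 := by
        refine Prod.ext ?_ ?_ <;> simp
      rw [h2, one_smul]

lemma toInd_toBal (w : IndBalH H f Y) : toInd H f Y (toBal H f Y w) = w := by
  refine Quotient.inductionOn w fun v => ?_
  obtain ⟨g', b⟩ := v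
  refine Quotient.inductionOn b fun u => ?_
  obtain ⟨x, y'⟩ := u
  induction x using Quotient.inductionOn with
  | h q =>
    show rawTo H f Y (g' * (q.1 : G), q.2) (((g', 1) : G × Equiv.Perm (Fin n)) • y') =
      Quotient.mk _ (g', Quotient.mk _ (Quotient.mk _ q, y'))
    unfold rawTo
    refine Quotient.sound ⟨q.1⁻¹, by simp [mul_assoc], ?_⟩
    rw [inv_inv]
    unfold BalH.act
    rw [Quotient.map_mk]
    have h1 : (Quotient.mk (QuotientGroup.leftRel (graphInH H f)) q : _ ⧸ graphInH H f) =
        ((q.1, (1 : Equiv.Perm (Fin n))) : H × Equiv.Perm (Fin n)) •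
          QuotientGroup.mk ((1 : H), q.2) := by
      rw [MulAction.Quotient.smul_mk]
      congr 1
      simp [Prod.mul_def]
    have h2 : y' = (((q.1 : G), (1 : Equiv.Perm (Fin n))) : G × Equiv.Perm (Fin n)) •
        ((((g' * (q.1 : G))⁻¹, (1 : Equiv.Perm (Fin n))) : G × Equiv.Perm (Fin n)) •
          (((g', 1) : G × Equiv.Perm (Fin n)) • y')) := by
      rw [smul_smul, smul_smul]
      have hone : (((q.1 : G), (1 : Equiv.Perm (Fin n))) : G × Equiv.Perm (Fin n)) *
          ((g' * (q.1 : G))⁻¹, (1 : Equiv.Perm (Fin n))) * ((g', 1) : G × Equiv.Perm (Fin n)) = 1 := by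
        refine Prod.ext ?_ ?_
        · simp [mul_inv_rev, mul_assoc]
        · simp
      rw [hone, one_smul]
    exact congrArg (Quotient.mk (balSetoidH H f Y)) (Prod.ext h1 h2)

end Aux

/-- For a proper subgroup `H < G` and a finite `H`-set `T` with graph subgroup
`Γ_T ≤ H × Σ_n ≤ G × Σ_n`, and any `(G × Σ_n)`-set `Y`, the `G`-set
`((G×Σ_n)/Γ_T) ×_{Σ_n} Y` is isomorphic to the induced `G`-set
`G ×_H (((H×Σ_n)/Γ_T) ×_{Σ_n} Y)`; in particular it has no `G`-fixed points. -/
theorem balanced_is_induced_and_has_no_fixed_points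
    {G : Type*} [Group G] [Fintype G] (H : Subgroup G) (hH : H ≠ ⊤) {n : ℕ}
    (f : H →* Equiv.Perm (Fin n)) (Y : Type*)
    [MulAction (G × Equiv.Perm (Fin n)) Y] :
    (∃ e : BalG H f Y ≃ IndBalH H f Y,
      ∀ (g : G) (z : BalG H f Y), e (BalG.act H f Y g z) = IndBalH.act H f Y g (e z)) ∧
    IsEmpty {z : BalG H f Y // ∀ g : G, BalG.act H f Y g z = z} := by
  constructor
  · exact ⟨⟨toInd H f Y, toBal H f Y, toBal_toInd H f Y, toInd_toBal H f Y⟩,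
      fun g z => toInd_act H f Y g z⟩
  · constructor
    rintro ⟨z, hz⟩
    obtain ⟨⟨x, y⟩, rfl⟩ := Quotient.exists_rep z
    obtain ⟨p, rfl⟩ := Quotient.exists_rep x
    have key : ∀ w : G, w ∈ H := by
      intro w
      have hzw := hz (p.1 * w * p.1⁻¹)
      obtain ⟨σ, h1, h2⟩ := Quotient.exact hzw
      have h1' : (QuotientGroup.mk p : _ ⧸ graphInAmbient H f) =
          QuotientGroup.mk (((1, σ) : G × Equiv.Perm (Fin n)) *
            (((p.1 * w * p.1⁻¹, 1) : G × Equiv.Perm (Fin n)) * p)) := h1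
      obtain ⟨hh, -⟩ := (QuotientGroup.eq).mp h1'
      have hw : p.1⁻¹ * (1 * (p.1 * w * p.1⁻¹ * p.1)) ∈ H := hh
      have e : p.1⁻¹ * (1 * (p.1 * w * p.1⁻¹ * p.1)) = w := by group
      rwa [e] at hw
    exact hH ((Subgroup.eq_top_iff' H).mpr key)
end
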